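/- Let t ≥ 1 and σ real with t^ε ≤ 1 - σ for some 0 < ε < 1/2 and 1-σ ≤ t, and let η = η₁ + iη₂ be the square root of (t + i(1-σ))/(2π) with η₁ + η₂ > 0. Then |η|² ≤ √2·t/(2π) ≤ √2·η₁² and |η| ≤ (4/3)·η₁, and sinh(πη₂) ≥ πη₂ ≥ a₂·t^(ε - 1/2), where a₂ = √π/(2√(√2+1)). -/

import Mathlib

private lemma aux_sq_le {a b : ℝ} (ha : 0 ≤ a) (hb : 0 ≤ b) (h : a ^ 2 ≤ b ^ 2) : a ≤ b := by
  calc a = Real.sqrt (a ^ 2) := (Real.sqrt_sq ha).symm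
    _ ≤ Real.sqrt (b ^ 2) := Real.sqrt_le_sqrt h
    _ = b := Real.sqrt_sq hb

set_option maxHeartbeats 800000 in
theorem stmt_19 (t σ ε : ℝ) (η : ℂ) (ht : 1 ≤ t) (hε1 : 0 < ε) (hε2 : ε < 1 / 2)
    (hσ1 : t ^ ε ≤ 1 - σ) (hσ2 : 1 - σ ≤ t)
    (hη : η ^ 2 = ((t : ℂ) + (1 - σ) * Complex.I) / (2 * Real.pi))
    (hsum : 0 < η.re + η.im) :
    ‖η‖ ^ 2 ≤ Real.sqrt 2 * t / (2 * Real.pi) ∧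
    Real.sqrt 2 * t / (2 * Real.pi) ≤ Real.sqrt 2 * η.re ^ 2 ∧
    ‖η‖ ≤ 4 / 3 * η.re ∧
    Real.sinh (Real.pi * η.im) ≥ Real.pi * η.im ∧
    Real.pi * η.im ≥ Real.pi.sqrt / (2 * Real.sqrt (Real.sqrt 2 + 1)) * t ^ (ε - 1 / 2) := by
  have hπ : (0:ℝ) < Real.pi := Real.pi_pos
  have ht0 : (0:ℝ) < t := by linarith
  have hu : (0:ℝ) < t ^ ε := Real.rpow_pos_of_pos ht0 ε
  have h2π : (2 * (Real.pi:ℂ)) ≠ 0 := by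
    simp [Complex.ofReal_ne_zero, Real.pi_ne_zero]
  have hη' : η ^ 2 * (2 * (Real.pi:ℂ)) = (t:ℂ) + (1 - σ) * Complex.I := by
    rw [hη, div_mul_cancel₀ _ h2π]
  have h1' := congrArg Complex.re hη'
  have h2' := congrArg Complex.im hη'
  simp [Complex.mul_re, Complex.mul_im, pow_two] at h1' h2'
  -- h1' : (η.re * η.re - η.im * η.im) * (2 * Real.pi) = t
  -- h2' : (η.re * η.im + η.im * η.re) * (2 * Real.pi) = 1 - σ
  have hP : t ^ ε ≤ 4 * Real.pi * (η.re * η.im) := by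
    have : (η.re * η.im + η.im * η.re) * (2 * Real.pi) = 4 * Real.pi * (η.re * η.im) := by
      ring
    linarith only [h2', hσ1, this.symm.trans h2']
  have hprod : 0 < η.re * η.im := by
    nlinarith only [hP, hu, hπ]
  have hre : 0 < η.re := by
    rcases lt_trichotomy η.re 0 with h | h | h
    · exfalso
      nlinarith only [hprod, hsum, h, sq_nonneg η.re]
    · exfalso; rw [h] at hprod; simp at hprod
    · exact h
  have him : 0 < η.im := by
    rcases (mul_pos_iff.mp hprod) with ⟨_, h⟩ | ⟨h, _⟩
    · exact h
    · linarith
  have hs0 : (0:ℝ) ≤ Real.sqrt 2 := Real.sqrt_nonneg 2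
  have hs2 : Real.sqrt 2 ^ 2 = 2 := Real.sq_sqrt (by norm_num)
  have habs : ‖η‖ ^ 2 = η.re ^ 2 + η.im ^ 2 := by
    rw [Complex.sq_norm, Complex.normSq_apply]; ring
  -- main 1
  have hXsq : (2 * Real.pi * (η.re ^ 2 + η.im ^ 2)) ^ 2 = t ^ 2 + (1 - σ) ^ 2 := by
    rw [← h1', ← h2']; ring
  have hXst : 2 * Real.pi * (η.re ^ 2 + η.im ^ 2) ≤ Real.sqrt 2 * t := by
    refine aux_sq_le (by positivity) (by positivity) ?_
    have h1σ : (1 - σ) ^ 2 ≤ t ^ 2 :=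
      pow_le_pow_left₀ (by linarith only [hσ1, hu.le]) hσ2 2
    have hst : (Real.sqrt 2 * t) ^ 2 = 2 * t ^ 2 := by rw [mul_pow, hs2]
    linarith only [hXsq, h1σ, hst]
  have main1 : η.re ^ 2 + η.im ^ 2 ≤ Real.sqrt 2 * t / (2 * Real.pi) := by
    rw [le_div_iff₀ (by positivity)]
    linarith only [hXst]
  -- main 2
  have hre2 : t / (2 * Real.pi) ≤ η.re ^ 2 := by
    rw [div_le_iff₀ (by positivity)]
    nlinarith only [h1', sq_nonneg η.im, hπ]
  have main2 : Real.sqrt 2 * t / (2 * Real.pi) ≤ Real.sqrt 2 * η.re ^ 2 := by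
    rw [mul_div_assoc]
    exact mul_le_mul_of_nonneg_left hre2 hs0
  -- main 3
  have hsle : Real.sqrt 2 ≤ 16 / 9 := by
    refine aux_sq_le hs0 (by norm_num) ?_
    rw [hs2]; norm_num
  have main3 : ‖η‖ ≤ 4 / 3 * η.re := by
    refine aux_sq_le (norm_nonneg η) (by positivity) ?_
    rw [habs]
    have hA : η.re ^ 2 + η.im ^ 2 ≤ Real.sqrt 2 * η.re ^ 2 := le_trans main1 main2
    have hB : 0 ≤ (16 / 9 - Real.sqrt 2) * η.re ^ 2 :=
      mul_nonneg (by linarith only [hsle]) (sq_nonneg η.re)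
    nlinarith only [hA, hB]
  -- main 4
  have main4 : Real.sinh (Real.pi * η.im) ≥ Real.pi * η.im :=
    Real.self_le_sinh_iff.mpr (by positivity)
  -- main 5
  refine ⟨by rw [habs]; exact main1, main2, main3, main4, ?_⟩
  set r := Real.sqrt Real.pi with hr
  set q := Real.sqrt (Real.sqrt 2 + 1) with hq
  set w := Real.sqrt t with hw
  have hr2 : r ^ 2 = Real.pi := Real.sq_sqrt hπ.le
  have hq2 : q ^ 2 = Real.sqrt 2 + 1 := Real.sq_sqrt (by positivity)
  have hw2 : w ^ 2 = t := Real.sq_sqrt ht0.le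
  have hr0 : 0 < r := Real.sqrt_pos.mpr hπ
  have hq0 : 0 < q := Real.sqrt_pos.mpr (by positivity)
  have hw0 : 0 < w := Real.sqrt_pos.mpr ht0
  have hpow : t ^ (ε - 1 / 2) = t ^ ε / w := by
    rw [Real.rpow_sub ht0, hw, Real.sqrt_eq_rpow]
  have hη1 : 4 * Real.pi * η.re ^ 2 ≤ (Real.sqrt 2 + 1) * t := by
    linarith only [hXst, h1']
  have h5a : (t ^ ε) ^ 2 ≤ (4 * Real.pi * (η.re * η.im)) ^ 2 :=
    pow_le_pow_left₀ hu.le hP 2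
  have hmul := mul_le_mul_of_nonneg_right hη1
    (show (0:ℝ) ≤ 4 * Real.pi ^ 2 * η.im ^ 2 by positivity)
  have key : Real.pi * (t ^ ε) ^ 2 ≤ 4 * (Real.sqrt 2 + 1) * t * (Real.pi * η.im) ^ 2 := by
    calc Real.pi * (t ^ ε) ^ 2
        ≤ Real.pi * (4 * Real.pi * (η.re * η.im)) ^ 2 :=
          mul_le_mul_of_nonneg_left h5a hπ.le
      _ = (4 * Real.pi * η.re ^ 2) * (4 * Real.pi ^ 2 * η.im ^ 2) := by ring
      _ ≤ ((Real.sqrt 2 + 1) * t) * (4 * Real.pi ^ 2 * η.im ^ 2) := hmul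
      _ = 4 * (Real.sqrt 2 + 1) * t * (Real.pi * η.im) ^ 2 := by ring
  have hfin : r * t ^ ε ≤ 2 * q * w * (Real.pi * η.im) := by
    refine aux_sq_le (by positivity) (by positivity) ?_
    have hX2 : (r * t ^ ε) ^ 2 = Real.pi * (t ^ ε) ^ 2 := by rw [mul_pow, hr2]
    have hY2 : (2 * q * w * (Real.pi * η.im)) ^ 2
        = 4 * (Real.sqrt 2 + 1) * t * (Real.pi * η.im) ^ 2 := by
      rw [show (2 * q * w * (Real.pi * η.im)) ^ 2
          = 4 * q ^ 2 * w ^ 2 * (Real.pi * η.im) ^ 2 from by ring, hq2, hw2]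
    rw [hX2, hY2]; exact key
  rw [ge_iff_le, hpow, div_mul_div_comm, div_le_iff₀ (by positivity)]
  nlinarith only [hfin]
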